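/- arXiv:1805.07660 — 2 statements merged into one kernel-verified Lean document; each statement's English description precedes it below -/
import Mathlib

section
/- Let a, b ∈ ℝ with a ≠ 1 or b ≠ 0. On ℂ² with coordinates (z, w), define ω₁ = dz and ω₂ = dz/(1−a+ib) + e^{−(a+ib)z + (1−a+ib)z̄} dw. Then dω₂ = (ω₁ − ω₂) ∧ ω̄₁ − ((a+ib)ω₁ + (a−ib)ω̄₁) ∧ ω₂. -/
noncomputable section

open Complex ComplexConjugate

/-- Exterior derivative of a (complex-valued, real-linear) 1-form on `ℂ²`, evaluated on a
pair of constant vectors. -/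
def extD1 (ω : ℂ × ℂ → ℂ × ℂ → ℂ) (p u v : ℂ × ℂ) : ℂ :=
  fderiv ℝ (fun q => ω q v) p u - fderiv ℝ (fun q => ω q u) p v

/-- Wedge product of two 1-forms on `ℂ²`. -/
def wdg (ω η : ℂ × ℂ → ℂ × ℂ → ℂ) (p u v : ℂ × ℂ) : ℂ :=
  ω p u * η p v - ω p v * η p u

/-- `ω₁ = dz`. -/
def om1 : ℂ × ℂ → ℂ × ℂ → ℂ := fun _ u => u.1

/-- `ω₂ = dz/(1−a+ib) + e^{−(a+ib)z + (1−a+ib)z̄} dw`. -/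
def om2 (a b : ℝ) : ℂ × ℂ → ℂ × ℂ → ℂ := fun p u =>
  u.1 / (1 - a + I * b)
    + Complex.exp (-((a : ℂ) + I * b) * p.1 + (1 - a + I * b) * conj p.1) * u.2

/-- For `a, b ∈ ℝ` with `a ≠ 1` or `b ≠ 0`, the forms `ω₁ = dz` and
`ω₂ = dz/(1−a+ib) + e^{−(a+ib)z + (1−a+ib)z̄} dw` on `ℂ²` satisfy
`dω₂ = (ω₁ − ω₂) ∧ ω̄₁ − ((a+ib)ω₁ + (a−ib)ω̄₁) ∧ ω₂`. -/
theorem stmt12 (a b : ℝ) (hab : a ≠ 1 ∨ b ≠ 0) :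
    ∀ p u v : ℂ × ℂ, extD1 (om2 a b) p u v =
      wdg (fun q x => om1 q x - om2 a b q x) (fun q x => conj (om1 q x)) p u v
      - wdg (fun q x => ((a : ℂ) + I * b) * om1 q x + ((a : ℂ) - I * b) * conj (om1 q x))
          (om2 a b) p u v := by
  intro p u v
  set A : ℂ := -((a : ℂ) + I * b) with hA
  set B : ℂ := 1 - (a : ℂ) + I * b with hBdef
  have hB : B ≠ 0 := by
    intro h
    rw [hBdef] at h
    simp [Complex.ext_iff] at h
    rcases hab with h1 | h1
    · exact h1 (by linarith [h.1])
    · exact h1 h.2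
  set T : (ℂ × ℂ) →L[ℝ] ℂ :=
    A • ((ContinuousLinearMap.fst ℂ ℂ ℂ).restrictScalars ℝ)
      + B • (Complex.conjCLE.toContinuousLinearMap.comp
          ((ContinuousLinearMap.fst ℂ ℂ ℂ).restrictScalars ℝ)) with hTdef
  have hTapp : ∀ q : ℂ × ℂ, T q = A * q.1 + B * conj q.1 := by
    intro q; simp [hTdef, Complex.conjCLE_apply]
  have key : ∀ (x : ℂ × ℂ), HasFDerivAt (fun q => om2 a b q x)
      (x.2 • ((ContinuousLinearMap.restrictScalars ℝ
        (ContinuousLinearMap.smulRight (1 : ℂ →L[ℂ] ℂ)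
          (Complex.exp (A * p.1 + B * conj p.1)))).comp T)) p := by
    intro x
    have h1 : HasFDerivAt (fun q : ℂ × ℂ => A * q.1 + B * conj q.1) T p := by
      have : (fun q : ℂ × ℂ => A * q.1 + B * conj q.1) = ⇑T := by
        funext q; rw [hTapp]
      rw [this]; exact T.hasFDerivAt
    have h2 := ((Complex.hasDerivAt_exp (A * p.1 + B * conj p.1)).hasFDerivAt.restrictScalars
      ℝ).comp p h1
    have h3 := (h2.mul_const x.2).const_add (x.1 / B)
    have heq : (fun q => om2 a b q x)
        = fun q : ℂ × ℂ => x.1 / B + (Complex.exp ∘ fun q : ℂ × ℂ =>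
            A * q.1 + B * conj q.1) q * x.2 := by
      funext q; simp [om2, hA, hBdef]
    rw [heq]; exact h3
  have hd : extD1 (om2 a b) p u v =
      Complex.exp (A * p.1 + B * conj p.1) * v.2 * (A * u.1 + B * conj u.1)
      - Complex.exp (A * p.1 + B * conj p.1) * u.2 * (A * v.1 + B * conj v.1) := by
    rw [extD1, (key v).fderiv, (key u).fderiv]
    simp [hTapp]
    ring
  rw [hd]
  simp only [wdg, om1, om2]
  rw [hA, hBdef]
  have hB' : (1 - (a:ℂ) + I * b) ≠ 0 := hB
  field_simp
  ring

end
end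

section
/- Let b ∈ ℝ, b ≠ 0, and let 𝔥 be the real Lie algebra with basis u, v, w and brackets [u,v] = 2bu + 2w, [u,w] = −bu, [v,w] = (2b² − 1/2)u + bv + 2bw. Then 𝔥 is isomorphic to 𝔰𝔩(2,ℝ); explicitly (for b ≠ −1/2), H = 2v, X = ((2b−1)/(4b²))u + (1/(2b))v + (1/(2b²))w, Y = (2b+1)u − 2bv + 2w satisfy [H,X] = 2X, [H,Y] = −2Y, [X,Y] = H. -/
open LieAlgebra.SpecialLinear

lemma memSl17 (M : Matrix (Fin 2) (Fin 2) ℝ) (h : M 0 0 + M 1 1 = 0) :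
    M ∈ sl (Fin 2) ℝ := by
  show M ∈ LinearMap.ker (Matrix.traceLinearMap (Fin 2) ℝ ℝ)
  rw [LinearMap.mem_ker]
  simpa [Matrix.trace_fin_two] using h

noncomputable def slU17 (b : ℝ) : sl (Fin 2) ℝ :=
  ⟨!![b, -2*b^2; 1/2, -b], memSl17 _ (by norm_num)⟩

noncomputable def slV17 : sl (Fin 2) ℝ :=
  ⟨!![1/2, 0; 0, -1/2], memSl17 _ (by norm_num)⟩

noncomputable def slW17 (b : ℝ) : sl (Fin 2) ℝ :=
  ⟨!![-b^2, 2*b^3+b^2; (1-2*b)/4, b^2], memSl17 _ (by norm_num)⟩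

lemma sl17_ext (A C : sl (Fin 2) ℝ) (h : A.val = C.val) : A = C := Subtype.ext h


lemma sl17_smul (c : ℝ) (A : sl (Fin 2) ℝ) :
    ((c • A : sl (Fin 2) ℝ) : Matrix (Fin 2) (Fin 2) ℝ) = c • (A : Matrix (Fin 2) (Fin 2) ℝ) := rfl

lemma sl17_add (A C : sl (Fin 2) ℝ) :
    ((A + C : sl (Fin 2) ℝ) : Matrix (Fin 2) (Fin 2) ℝ) = (A : Matrix (Fin 2) (Fin 2) ℝ) + C := rfl

lemma sl17_UV (b : ℝ) : ⁅slU17 b, slV17⁆ = (2 * b) • slU17 b + (2 : ℝ) • slW17 b := by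
  refine Subtype.ext ?_
  rw [sl_bracket]
  ext i j
  fin_cases i <;> fin_cases j <;>
    simp [slU17, slV17, slW17, Matrix.mul_apply, Fin.sum_univ_two, sl17_smul, sl17_add, Matrix.smul_apply, Matrix.add_apply] <;> ring

lemma sl17_UW (b : ℝ) : ⁅slU17 b, slW17 b⁆ = (-b) • slU17 b := by
  refine Subtype.ext ?_
  rw [sl_bracket]
  ext i j
  fin_cases i <;> fin_cases j <;>
    simp [slU17, slW17, Matrix.mul_apply, Fin.sum_univ_two, sl17_smul, Matrix.smul_apply] <;> ring

lemma sl17_VW (b : ℝ) :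
    ⁅slV17, slW17 b⁆ = (2 * b ^ 2 - 1/2) • slU17 b + b • slV17 + (2 * b) • slW17 b := by
  refine Subtype.ext ?_
  rw [sl_bracket]
  ext i j
  fin_cases i <;> fin_cases j <;>
    simp [slU17, slV17, slW17, Matrix.mul_apply, Fin.sum_univ_two, sl17_smul, sl17_add, Matrix.smul_apply, Matrix.add_apply] <;> ring

set_option maxHeartbeats 1000000 in
lemma sl17_span (b : ℝ) (hb : b ≠ 0) (m00 m01 m10 : ℝ) :
    (m01 * ((2*b-1)/(4*b^2)) + m10 * (2*b+1)) • slU17 b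
      + (2 * m00 + m01 * (1/(2*b)) - m10 * (2*b)) • slV17
      + (m01 * (1/(2*b^2)) + m10 * 2) • slW17 b
      = ⟨!![m00, m01; m10, -m00], memSl17 _ (by norm_num)⟩ := by
  apply Subtype.ext
  simp only [sl17_add, sl17_smul, slU17, slV17, slW17]
  ext i j
  fin_cases i <;> fin_cases j <;>
    simp only [Matrix.smul_apply, Matrix.add_apply, Matrix.sub_apply, Matrix.cons_val',
      Matrix.cons_val_zero, Matrix.cons_val_one, Matrix.head_cons, Matrix.head_fin_const,
      Matrix.empty_val', Matrix.cons_val_fin_one, smul_eq_mul, Fin.isValue,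
        Matrix.of_apply, Fin.zero_eta, Fin.mk_one] <;>
    field_simp <;> ring



set_option maxHeartbeats 2000000 in
/-- For `b ∈ ℝ`, `b ∉ {0, −1/2}`, the 3-dimensional real Lie algebra `𝔥` with
basis `u, v, w` and brackets `[u,v] = 2bu + 2w`, `[u,w] = −bu`,
`[v,w] = (2b² − 1/2)u + bv + 2bw` is isomorphic to `𝔰𝔩(2,ℝ)`; explicitly `H = 2v`,
`X = ((2b−1)/(4b²))u + (1/(2b))v + (1/(2b²))w`, `Y = (2b+1)u − 2bv + 2w` satisfy
`[H,X] = 2X`, `[H,Y] = −2Y`, `[X,Y] = H`. -/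
theorem stmt17 (b : ℝ) (hb : b ≠ 0) (hb' : b ≠ -(1/2))
    (L : Type) [LieRing L] [LieAlgebra ℝ L] (B : Module.Basis (Fin 3) ℝ L)
    (u v w : L) (hu : u = B 0) (hv : v = B 1) (hw : w = B 2)
    (huv : ⁅u, v⁆ = (2 * b) • u + (2 : ℝ) • w)
    (huw : ⁅u, w⁆ = (-b) • u)
    (hvw : ⁅v, w⁆ = (2 * b ^ 2 - 1/2) • u + b • v + (2 * b) • w) :
    Nonempty (L ≃ₗ⁅ℝ⁆ LieAlgebra.SpecialLinear.sl (Fin 2) ℝ) ∧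
    (⁅(2 : ℝ) • v, ((2 * b - 1) / (4 * b ^ 2)) • u + (1 / (2 * b)) • v + (1 / (2 * b ^ 2)) • w⁆
        = (2 : ℝ) • (((2 * b - 1) / (4 * b ^ 2)) • u + (1 / (2 * b)) • v + (1 / (2 * b ^ 2)) • w)) ∧
    (⁅(2 : ℝ) • v, (2 * b + 1) • u + (-(2 * b)) • v + (2 : ℝ) • w⁆
        = (-2 : ℝ) • ((2 * b + 1) • u + (-(2 * b)) • v + (2 : ℝ) • w)) ∧
    (⁅((2 * b - 1) / (4 * b ^ 2)) • u + (1 / (2 * b)) • v + (1 / (2 * b ^ 2)) • w,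
        (2 * b + 1) • u + (-(2 * b)) • v + (2 : ℝ) • w⁆ = (2 : ℝ) • v) := by
  subst hu hv hw
  have hvu : ⁅B 1, B 0⁆ = -((2 * b) • B 0 + (2 : ℝ) • B 2) := by rw [← lie_skew, huv]
  have hwu : ⁅B 2, B 0⁆ = -((-b) • B 0) := by rw [← lie_skew, huw]
  have hwv : ⁅B 2, B 1⁆ = -((2 * b ^ 2 - 1/2) • B 0 + b • B 1 + (2 * b) • B 2) := by
    rw [← lie_skew, hvw]
  refine ⟨?_, ?_, ?_, ?_⟩
  · -- the isomorphism
    set φ : L →ₗ[ℝ] sl (Fin 2) ℝ := B.constr ℝ ![slU17 b, slV17, slW17 b] with hφdef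
    have hφ0 : φ (B 0) = slU17 b := by simp [hφdef, Module.Basis.constr_basis]
    have hφ1 : φ (B 1) = slV17 := by simp [hφdef, Module.Basis.constr_basis]
    have hφ2 : φ (B 2) = slW17 b := by simp [hφdef, Module.Basis.constr_basis]
    have hvu : ⁅B 1, B 0⁆ = -((2 * b) • B 0 + (2 : ℝ) • B 2) := by rw [← lie_skew, huv]
    have hwu : ⁅B 2, B 0⁆ = -((-b) • B 0) := by rw [← lie_skew, huw]
    have hwv : ⁅B 2, B 1⁆ = -((2 * b ^ 2 - 1/2) • B 0 + b • B 1 + (2 * b) • B 2) := by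
      rw [← lie_skew, hvw]
    have hVU : ⁅slV17, slU17 b⁆ = -((2 * b) • slU17 b + (2 : ℝ) • slW17 b) := by
      rw [← lie_skew, sl17_UV]
    have hWU : ⁅slW17 b, slU17 b⁆ = -((-b) • slU17 b) := by rw [← lie_skew, sl17_UW]
    have hWV : ⁅slW17 b, slV17⁆
        = -((2 * b ^ 2 - 1/2) • slU17 b + b • slV17 + (2 * b) • slW17 b) := by
      rw [← lie_skew, sl17_VW]
    have key : ∀ x y : L, φ ⁅x, y⁆ = ⁅φ x, φ y⁆ := by
      intro x y
      have hx := (B.sum_repr x).symm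
      have hy := (B.sum_repr y).symm
      rw [Fin.sum_univ_three] at hx hy
      rw [hx, hy]
      simp only [lie_add, add_lie, lie_smul, smul_lie, lie_self, smul_zero, add_zero, zero_add,
        map_add, map_smul, hφ0, hφ1, hφ2, huv, huw, hvw, hvu, hwu, hwv,
        sl17_UV, sl17_UW, sl17_VW, hVU, hWU, hWV, map_neg, smul_neg]
      try module
    let Φ : L →ₗ⁅ℝ⁆ sl (Fin 2) ℝ := { φ with map_lie' := fun {x y} => key x y }
    have hΦφ : ∀ x, Φ x = φ x := fun _ => rfl
    have hinj : Function.Injective φ := by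
      apply LinearMap.ker_eq_bot.mp
      apply LinearMap.ker_eq_bot'.mpr
      intro x hx0
      have hx := (B.sum_repr x).symm
      rw [Fin.sum_univ_three] at hx
      set a0 := B.repr x 0; set a1 := B.repr x 1; set a2 := B.repr x 2
      rw [hx] at hx0
      simp only [map_add, map_smul, hφ0, hφ1, hφ2] at hx0
      have hval := congrArg Subtype.val hx0
      simp only [sl17_add, sl17_smul, slU17, slV17, slW17, ZeroMemClass.coe_zero] at hval
      have e1 := congrFun (congrFun hval 0) 1
      have e2 := congrFun (congrFun hval 1) 0
      have e3 := congrFun (congrFun hval 0) 0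
      simp [Matrix.smul_apply, Matrix.add_apply] at e1 e2 e3
      have hb2 : b ^ 2 ≠ 0 := pow_ne_zero _ hb
      have h1 : (-2) * a0 + (2 * b + 1) * a2 = 0 := by
        apply mul_left_cancel₀ hb2
        linear_combination e1
      have hd : a2 = 0 := by linear_combination (h1 + 4 * e2) / 2
      have ha : a0 = 0 := by linear_combination (-1/2) * h1 + ((2*b+1)/2) * hd
      have hc : a1 = 0 := by linear_combination 2 * e3 - 2 * b * ha + 2 * b ^ 2 * hd
      rw [hx, ha, hc, hd]
      simp
    have hsurj : Function.Surjective φ := by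
      rintro ⟨M, hM⟩
      have htr : M 0 0 + M 1 1 = 0 := by
        have := LinearMap.mem_ker.mp hM
        simpa [Matrix.trace_fin_two] using this
      refine ⟨(M 0 1 * ((2*b-1)/(4*b^2)) + M 1 0 * (2*b+1)) • B 0
        + (2 * M 0 0 + M 0 1 * (1/(2*b)) - M 1 0 * (2*b)) • B 1
        + (M 0 1 * (1/(2*b^2)) + M 1 0 * 2) • B 2, ?_⟩
      simp only [map_add, map_smul, map_sub, hφ0, hφ1, hφ2]
      rw [sl17_span b hb (M 0 0) (M 0 1) (M 1 0)]
      apply Subtype.ext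
      show _ = M
      conv_rhs => rw [Matrix.eta_fin_two M]
      rw [show M 1 1 = -(M 0 0) by linarith]
    exact ⟨LieEquiv.ofBijective Φ ⟨hinj, hsurj⟩⟩
  all_goals
    simp only [lie_add, add_lie, lie_smul, smul_lie, lie_self, smul_zero, zero_add, add_zero,
      huv, huw, hvw, hvu, hwu, hwv]
    match_scalars <;> field_simp <;> ring
end
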